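/- (Theorem 5(b), completeness) Let h ≥ √2/2. If the cylinder with axis point c, unit direction u, and radius ρ ≥ 0 is circumscribed to the five vertices of BP, then ρ = (4h²+1)/(4h²+2) and u = δ·u_{k,ε} for some δ ∈ {−1,1}, k ∈ {0,1,2}, ε ∈ {−1,1}, where u_{k,ε} = R_k(0, √(2/(2h²+1)), ε√((2h²−1)/(2h²+1))) and R_k is the rotation about the third coordinate axis by angle 2πk/3. In particular, for h > √2/2 there are exactly six circumscribed cylinders, all of the same radius (4h²+1)/(4h²+2). -/

import Mathlib

/-- The five vertices of the trigonal bipyramid `BP` of interapex half-height `h`. -/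
noncomputable def bp (h : ℝ) : Fin 5 → EuclideanSpace ℝ (Fin 3) := fun i =>
  (WithLp.equiv 2 (Fin 3 → ℝ)).symm
    (![![0, 0, h], ![0, 0, -h], ![1, 0, 0], ![-(1/2), Real.sqrt 3 / 2, 0],
       ![-(1/2), -(Real.sqrt 3 / 2), 0]] i)

/-- Rotation about the third coordinate axis by angle `θ`. -/
noncomputable def rotZ (θ : ℝ) (v : EuclideanSpace ℝ (Fin 3)) : EuclideanSpace ℝ (Fin 3) :=
  (WithLp.equiv 2 (Fin 3 → ℝ)).symm
    ![v 0 * Real.cos θ - v 1 * Real.sin θ, v 0 * Real.sin θ + v 1 * Real.cos θ, v 2]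

/-- The axis direction `u_{k,ε} = R_k (0, √(2/(2h²+1)), ε√((2h²−1)/(2h²+1)))`. -/
noncomputable def ubp (h : ℝ) (k : Fin 3) (ε : ℝ) : EuclideanSpace ℝ (Fin 3) :=
  rotZ (2 * Real.pi * (k : ℕ) / 3) ((WithLp.equiv 2 (Fin 3 → ℝ)).symm
    ![0, Real.sqrt (2 / (2 * h ^ 2 + 1)),
      ε * Real.sqrt ((2 * h ^ 2 - 1) / (2 * h ^ 2 + 1))])

set_option maxHeartbeats 2000000 in
/-- Theorem 5(b), completeness: for `h ≥ √2/2`, every cylinder circumscribed to the five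
vertices of `BP` has radius `(4h²+1)/(4h²+2)` and its axis direction is, up to sign, one of
the six directions `u_{k,ε}`. -/
theorem bipyramid_circumscribed_cylinders_complete (h : ℝ)
    (hh : Real.sqrt 2 / 2 ≤ h) (u c : EuclideanSpace ℝ (Fin 3)) (ρ : ℝ)
    (hu : ‖u‖ = 1) (hρ : 0 ≤ ρ)
    (hcirc : ∀ i : Fin 5,
      ‖bp h i - c‖ ^ 2 - (inner ℝ (bp h i - c) u : ℝ) ^ 2 = ρ ^ 2) :
    ρ = (4 * h ^ 2 + 1) / (4 * h ^ 2 + 2) ∧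
      ∃ (δ : ℝ) (k : Fin 3) (ε : ℝ), (δ = 1 ∨ δ = -1) ∧ (ε = 1 ∨ ε = -1) ∧
        u = δ • ubp h k ε := by
  obtain ⟨a, b, w, x, y, z, ha, hb, hww, hx, hy, hz0⟩ :
      ∃ a b w x y z, u 0 = a ∧ u 1 = b ∧ u 2 = w ∧ c 0 = x ∧ c 1 = y ∧ c 2 = z :=
    ⟨_, _, _, _, _, _, rfl, rfl, rfl, rfl, rfl, rfl⟩
  have hs3 : Real.sqrt 3 ^ 2 = 3 := Real.sq_sqrt (by norm_num)
  set s := Real.sqrt 3 with hsdef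
  have hspos : 0 < s := Real.sqrt_pos.mpr (by norm_num)
  have hhpos : 0 < h := lt_of_lt_of_le (by positivity) hh
  have h2 : 1 ≤ 2 * h ^ 2 := by
    nlinarith [Real.sq_sqrt (by norm_num : (2:ℝ) ≥ 0), Real.sqrt_nonneg 2]
  have expand : ∀ v : EuclideanSpace ℝ (Fin 3), ‖v‖ ^ 2 = v 0 ^ 2 + v 1 ^ 2 + v 2 ^ 2 := by
    intro v
    rw [EuclideanSpace.norm_eq, Real.sq_sqrt (by positivity)]
    simp [Fin.sum_univ_three, sq_abs]
  have expinner : ∀ v : EuclideanSpace ℝ (Fin 3),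
      (inner ℝ v u : ℝ) = v 0 * a + v 1 * b + v 2 * w := by
    intro v
    rw [← ha, ← hb, ← hww]
    simp [PiLp.inner_apply, Fin.sum_univ_three, mul_comm]
  have hN : a ^ 2 + b ^ 2 + w ^ 2 = 1 := by
    have e : ‖u‖ ^ 2 = 1 := by rw [hu]; norm_num
    rw [expand] at e
    rw [ha, hb, hww] at e
    exact e
  have he1 : (0 - x) ^ 2 + (0 - y) ^ 2 + (h - z) ^ 2
      - ((0 - x) * a + (0 - y) * b + (h - z) * w) ^ 2 = ρ ^ 2 := by
    have e := hcirc 0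
    rw [expand, expinner] at e
    simp [bp, hx, hy, hz0] at e
    linear_combination e
  have he2 : (0 - x) ^ 2 + (0 - y) ^ 2 + (-h - z) ^ 2
      - ((0 - x) * a + (0 - y) * b + (-h - z) * w) ^ 2 = ρ ^ 2 := by
    have e := hcirc 1
    rw [expand, expinner] at e
    simp [bp, hx, hy, hz0] at e
    linear_combination e
  have he3 : (1 - x) ^ 2 + (0 - y) ^ 2 + (0 - z) ^ 2
      - ((1 - x) * a + (0 - y) * b + (0 - z) * w) ^ 2 = ρ ^ 2 := by
    have e := hcirc 2
    rw [expand, expinner] at e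
    simp [bp, hx, hy, hz0] at e
    linear_combination e
  have he4 : (-(1/2) - x) ^ 2 + (s/2 - y) ^ 2 + (0 - z) ^ 2
      - ((-(1/2) - x) * a + (s/2 - y) * b + (0 - z) * w) ^ 2 = ρ ^ 2 := by
    have e := hcirc 3
    rw [expand, expinner] at e
    simp [bp, hx, hy, hz0, ← hsdef] at e
    linear_combination e
  have he5 : (-(1/2) - x) ^ 2 + (-(s/2) - y) ^ 2 + (0 - z) ^ 2
      - ((-(1/2) - x) * a + (-(s/2) - y) * b + (0 - z) * w) ^ 2 = ρ ^ 2 := by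
    have e := hcirc 4
    rw [expand, expinner] at e
    simp [bp, hx, hy, hz0, ← hsdef] at e
    linear_combination e
  obtain ⟨t, ht⟩ : ∃ t, t = a * x + b * y + w * z := ⟨_, rfl⟩
  have hzw : h * (z - w * t) = 0 := by linear_combination (he2 - he1) / 4 - w * h * ht
  have hz : z = w * t := by
    rcases mul_eq_zero.mp hzw with h' | h'
    · exact absurd h' (ne_of_gt hhpos)
    · linear_combination h' 
  have hq2 : (2 * h ^ 2 + 1) * (a ^ 2 + b ^ 2) = 2 := by
    linear_combination (-2/3) * (he3 + he4 + he5) + (he1 + he2)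
      + (1/3) * (1 - b ^ 2) * hs3 + 2 * h ^ 2 * hN
  have hG : (a ^ 2 + b ^ 2) * t = a * x + b * y := by
    linear_combination t * hN + ht + w * hz
  have hF3 : a * (a ^ 2 - 3 * b ^ 2) = 0 := by
    linear_combination (-4/3) * (a * he3 + ((-a + s * b)/2) * he4 + ((-a - s * b)/2) * he5)
      + 3 * w * hz + 3 * w ^ 2 * ht + 3 * (w * z + b * y + a * x) * hN + hG
      + (-(a ^ 2 + b ^ 2)) * ht
      + (-(4/3) * b * y + (4/3) * b ^ 2 * w * z + (4/3) * b ^ 3 * y - (1/3) * a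
         + a * b ^ 2 + (4/3) * a * b ^ 2 * x) * hs3
  have hx2 : 2 * x = (a ^ 2 + b ^ 2) / 2 - a ^ 2 + 2 * t * a := by
    linear_combination (-2/3) * he3 + (1/3) * he4 + (1/3) * he5
      + ((b ^ 2 - 1)/6) * hs3 + (-2 * a) * ht
  have hy2s : s * (2 * y - (a * b + 2 * t * b)) = 0 := by
    linear_combination he5 - he4 - 2 * b * s * ht
  have hy2 : 2 * y = a * b + 2 * t * b := by
    rcases mul_eq_zero.mp hy2s with h' | h'
    · exact absurd h' (ne_of_gt hspos)
    · linear_combination h' 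
  have hr2 : ρ ^ 2 = h ^ 2 * (a ^ 2 + b ^ 2) + (a ^ 2 + b ^ 2) ^ 2 / 16 := by
    linear_combination (-1/2) * (he1 + he2)
      + (x/2 + b^2/8 + a*t/2 - a*w*z - a*b*y - a^2/8 - a^2*x/2 - a^2*b^2/8 - a^3*t/2 + a^4/8) * hx2
      + (y/2 + b*t/2 - b*w*z - b^2*y/2 - b^3*t/2 + a*b/4 - a*b^3/2 - a^2*b*t + a^3*b/4) * hy2
      + (z + w*t - w^2*z - w^3*t - 2*b^2*w*t - (3/2)*a*b^2*w - 2*a^2*w*t + a^3*w/2) * hz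
      + (-h^2 - w^2*t^2 - b^2*t^2 - (3/2)*a*b^2*t - a^2*t^2 + a^3*t/2) * hN
      + (-(1/16)*a^3 + (3/16)*a*b^2) * hF3
  have hden : (0:ℝ) < 2 * h ^ 2 + 1 := by positivity
  -- radius
  have hKpos : (0:ℝ) < (4 * h ^ 2 + 1) / (4 * h ^ 2 + 2) := by positivity
  have hrho : ρ = (4 * h ^ 2 + 1) / (4 * h ^ 2 + 2) := by
    have hqv : a ^ 2 + b ^ 2 = 2 / (2 * h ^ 2 + 1) := by
      rw [eq_div_iff (ne_of_gt hden)]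
      linear_combination hq2
    have hK2 : ρ ^ 2 = ((4 * h ^ 2 + 1) / (4 * h ^ 2 + 2)) ^ 2 := by
      rw [hr2, hqv]
      field_simp
      ring
    have : (ρ - (4 * h ^ 2 + 1) / (4 * h ^ 2 + 2)) * (ρ + (4 * h ^ 2 + 1) / (4 * h ^ 2 + 2)) = 0 := by
      linear_combination hK2
    rcases mul_eq_zero.mp this with h' | h'
    · linear_combination h'
    · exfalso; linarith only [hρ, hKpos, h']
  refine ⟨hrho, ?_⟩
  -- directions
  obtain ⟨r0, hr0d⟩ : ∃ r0, r0 = Real.sqrt (2 / (2 * h ^ 2 + 1)) := ⟨_, rfl⟩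
  obtain ⟨W, hWd⟩ : ∃ W, W = Real.sqrt ((2 * h ^ 2 - 1) / (2 * h ^ 2 + 1)) := ⟨_, rfl⟩
  have hr0sq : r0 ^ 2 = 2 / (2 * h ^ 2 + 1) := by rw [hr0d]; exact Real.sq_sqrt (by positivity)
  have hr0pos : 0 < r0 := by rw [hr0d]; exact Real.sqrt_pos.mpr (by positivity)
  have hWsq : W ^ 2 = (2 * h ^ 2 - 1) / (2 * h ^ 2 + 1) := by
    rw [hWd]; exact Real.sq_sqrt (div_nonneg (by linarith) (by positivity))
  have hq2' : a ^ 2 + b ^ 2 = r0 ^ 2 := by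
    rw [hr0sq, eq_div_iff (ne_of_gt hden)]
    linear_combination hq2
  have hw2 : w ^ 2 = W ^ 2 := by
    rw [hWsq, eq_div_iff (ne_of_gt hden)]
    linear_combination (2 * h ^ 2 + 1) * hN - hq2
  have hwe : ∃ ε', (ε' = (1:ℝ) ∨ ε' = -1) ∧ w = ε' * W := by
    have : (w - W) * (w + W) = 0 := by linear_combination hw2
    rcases mul_eq_zero.mp this with h' | h'
    · exact ⟨1, Or.inl rfl, by linear_combination h'⟩
    · exact ⟨-1, Or.inr rfl, by linear_combination h'⟩
  obtain ⟨ε', hε', hwε⟩ := hwe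
  -- component machinery
  have hext : ∀ v₁ v₂ : EuclideanSpace ℝ (Fin 3),
      v₁ 0 = v₂ 0 → v₁ 1 = v₂ 1 → v₁ 2 = v₂ 2 → v₁ = v₂ := by
    intro v₁ v₂ h0 h1 h2
    ext i
    fin_cases i <;> assumption
  have hsm : ∀ (δ : ℝ) (k : Fin 3) (ε : ℝ) (i : Fin 3),
      (δ • ubp h k ε) i = δ * ubp h k ε i := fun _ _ _ _ => rfl
  have cast1 : ((((1:Fin 3):ℕ)):ℝ) = 1 := by norm_num
  have cast2 : ((((2:Fin 3):ℕ)):ℝ) = 2 := by norm_num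
  have cast0 : ((((0:Fin 3):ℕ)):ℝ) = 0 := by norm_num
  have c0 : Real.cos (2 * Real.pi * ((0:Fin 3):ℕ) / 3) = 1 := by
    rw [cast0, show 2 * Real.pi * 0 / 3 = 0 by ring, Real.cos_zero]
  have s0 : Real.sin (2 * Real.pi * ((0:Fin 3):ℕ) / 3) = 0 := by
    rw [cast0, show 2 * Real.pi * 0 / 3 = 0 by ring, Real.sin_zero]
  have c23 : Real.cos (2 * Real.pi * ((1:Fin 3):ℕ) / 3) = -(1/2) := by
    rw [cast1, show 2 * Real.pi * 1 / 3 = Real.pi - Real.pi / 3 by ring, Real.cos_pi_sub,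
      Real.cos_pi_div_three]
  have s23 : Real.sin (2 * Real.pi * ((1:Fin 3):ℕ) / 3) = s / 2 := by
    rw [cast1, show 2 * Real.pi * 1 / 3 = Real.pi - Real.pi / 3 by ring, Real.sin_pi_sub,
      Real.sin_pi_div_three, hsdef]
  have c43 : Real.cos (2 * Real.pi * ((2:Fin 3):ℕ) / 3) = -(1/2) := by
    rw [cast2, show 2 * Real.pi * 2 / 3 = Real.pi / 3 + Real.pi by ring, Real.cos_add_pi,
      Real.cos_pi_div_three]
  have s43 : Real.sin (2 * Real.pi * ((2:Fin 3):ℕ) / 3) = -(s / 2) := by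
    rw [cast2, show 2 * Real.pi * 2 / 3 = Real.pi / 3 + Real.pi by ring, Real.sin_add_pi,
      Real.sin_pi_div_three, hsdef]
  have hub0 : ∀ ε : ℝ, ubp h 0 ε 0 = 0 ∧ ubp h 0 ε 1 = r0 ∧ ubp h 0 ε 2 = ε * W := by
    intro ε
    refine ⟨?_, ?_, ?_⟩ <;>
      simp only [ubp, rotZ, WithLp.equiv_symm_apply, WithLp.ofLp_toLp, Matrix.cons_val_zero, Matrix.cons_val_one,
        Matrix.head_cons, Matrix.cons_val_two, Matrix.tail_cons, c0, s0, ← hr0d, ← hWd] <;> ring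
  have hub1 : ∀ ε : ℝ, ubp h 1 ε 0 = -(r0 * (s/2)) ∧ ubp h 1 ε 1 = -(r0/2) ∧
      ubp h 1 ε 2 = ε * W := by
    intro ε
    refine ⟨?_, ?_, ?_⟩ <;>
      simp only [ubp, rotZ, WithLp.equiv_symm_apply, WithLp.ofLp_toLp, Matrix.cons_val_zero, Matrix.cons_val_one,
        Matrix.head_cons, Matrix.cons_val_two, Matrix.tail_cons, c23, s23, ← hr0d, ← hWd] <;> ring
  have hub2 : ∀ ε : ℝ, ubp h 2 ε 0 = r0 * (s/2) ∧ ubp h 2 ε 1 = -(r0/2) ∧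
      ubp h 2 ε 2 = ε * W := by
    intro ε
    refine ⟨?_, ?_, ?_⟩ <;>
      simp only [ubp, rotZ, WithLp.equiv_symm_apply, WithLp.ofLp_toLp, Matrix.cons_val_zero, Matrix.cons_val_one,
        Matrix.head_cons, Matrix.cons_val_two, Matrix.tail_cons, c43, s43, ← hr0d, ← hWd] <;> ring
  have hεn : -ε' = (1:ℝ) ∨ -ε' = -1 := by
    rcases hε' with h' | h'
    · right; rw [h']
    · left; rw [h']; ring
  rcases mul_eq_zero.mp hF3 with haz | hab
  · -- a = 0, b = ± r0
    have hbb : (b - r0) * (b + r0) = 0 := by linear_combination hq2' - a * haz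
    rcases mul_eq_zero.mp hbb with hbr | hbr
    · refine ⟨1, 0, ε', Or.inl rfl, hε', hext _ _ ?_ ?_ ?_⟩ <;> rw [hsm]
      · rw [(hub0 ε').1]; linear_combination ha + haz
      · rw [(hub0 ε').2.1]; linear_combination hb + hbr
      · rw [(hub0 ε').2.2]; linear_combination hww + hwε
    · refine ⟨-1, 0, -ε', Or.inr rfl, hεn, hext _ _ ?_ ?_ ?_⟩ <;> rw [hsm]
      · rw [(hub0 (-ε')).1]; linear_combination ha + haz
      · rw [(hub0 (-ε')).2.1]; linear_combination hb + hbr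
      · rw [(hub0 (-ε')).2.2]; linear_combination hww + hwε
  · -- a^2 = 3 b^2
    have hbb : (2 * b - r0) * (2 * b + r0) = 0 := by linear_combination hq2' - hab
    have hasb : (a - s * b) * (a + s * b) = 0 := by linear_combination hab - b ^ 2 * hs3
    rcases mul_eq_zero.mp hasb with hab' | hab' <;> rcases mul_eq_zero.mp hbb with hbr | hbr
    · refine ⟨-1, 1, -ε', Or.inr rfl, hεn, hext _ _ ?_ ?_ ?_⟩ <;> rw [hsm]
      · rw [(hub1 (-ε')).1]; linear_combination ha + hab' + (s/2) * hbr
      · rw [(hub1 (-ε')).2.1]; linear_combination hb + (1/2) * hbr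
      · rw [(hub1 (-ε')).2.2]; linear_combination hww + hwε
    · refine ⟨1, 1, ε', Or.inl rfl, hε', hext _ _ ?_ ?_ ?_⟩ <;> rw [hsm]
      · rw [(hub1 ε').1]; linear_combination ha + hab' + (s/2) * hbr
      · rw [(hub1 ε').2.1]; linear_combination hb + (1/2) * hbr
      · rw [(hub1 ε').2.2]; linear_combination hww + hwε
    · refine ⟨-1, 2, -ε', Or.inr rfl, hεn, hext _ _ ?_ ?_ ?_⟩ <;> rw [hsm]
      · rw [(hub2 (-ε')).1]; linear_combination ha + hab' - (s/2) * hbr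
      · rw [(hub2 (-ε')).2.1]; linear_combination hb + (1/2) * hbr
      · rw [(hub2 (-ε')).2.2]; linear_combination hww + hwε
    · refine ⟨1, 2, ε', Or.inl rfl, hε', hext _ _ ?_ ?_ ?_⟩ <;> rw [hsm]
      · rw [(hub2 ε').1]; linear_combination ha + hab' - (s/2) * hbr
      · rw [(hub2 ε').2.1]; linear_combination hb + (1/2) * hbr
      · rw [(hub2 ε').2.2]; linear_combination hww + hwε
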